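/- For Class 2 paths (steps (1,1) weight 1 length 1; (i,0) weight b_i length i for i∈B; (i,-1) weight a_i length i for i∈A): for all 0 ≤ m ≤ n, the total weight of pointed paths from (0,0) to the line y=1 with length n+1, non-positive pointed length m, and last step of length ≥ 1, equals the total weight f_n of nonnegative paths of length n. -/

import Mathlib

/-- Abstract steps: `up` is `(1,1)`, `flat i` is `(i,0)` and `down i` is `(i,-1)`. -/
inductive Step where
  | up : Step
  | flat : ℕ → Step
  | down : ℕ → Step

/-- Height change of a step. -/
def dh : Step → ℤ
  | .up => 1
  | .flat _ => 0
  | .down _ => -1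

/-- Length of a step (Class 2). -/
def len : Step → ℕ
  | .up => 1
  | .flat i => i
  | .down i => i

/-- A step is allowed: flat steps are indexed by `B`, down steps by `A`. -/
def Valid (A B : Finset ℕ) : Step → Prop
  | .up => True
  | .flat i => i ∈ B
  | .down i => i ∈ A

/-- Weight of a step. -/
def wt {R : Type*} [CommRing R] (a b : ℕ → R) : Step → R
  | .up => 1
  | .flat i => b i
  | .down i => a i

/-- Weight of a path. -/
def pathWt {R : Type*} [CommRing R] (a b : ℕ → R) (L : List Step) : R :=
  (L.map (wt a b)).prod

/-- Length of a path. -/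
def pathLen (L : List Step) : ℕ := (L.map len).sum

/-- A nonnegative path: ends on the x-axis and never goes below it. -/
def Nonneg (L : List Step) : Prop :=
  (L.map dh).sum = 0 ∧ ∀ h ∈ (L.map dh).scanl (· + ·) 0, 0 ≤ h

/-- The non-positive length `\bar l(L)`: the sum of the lengths of the steps of `L`
whose ending height is `≤ 0`. -/
def npLen (L : List Step) : ℕ :=
  (((L.zip (((L.map dh).scanl (· + ·) 0).tail)).filter
    (fun p => decide (p.2 ≤ 0))).map (fun p => len p.1)).sum


namespace CFaux

def sumdh (L : List Step) : ℤ := (L.map dh).sum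

@[simp] lemma sumdh_nil : sumdh [] = 0 := rfl
@[simp] lemma sumdh_cons (s : Step) (T : List Step) : sumdh (s :: T) = dh s + sumdh T := by
  simp [sumdh]
@[simp] lemma sumdh_append (X Y : List Step) : sumdh (X ++ Y) = sumdh X + sumdh Y := by
  simp [sumdh]

@[simp] lemma pathLen_nil : pathLen [] = 0 := rfl
@[simp] lemma pathLen_cons (s : Step) (T : List Step) :
    pathLen (s :: T) = len s + pathLen T := by simp [pathLen]
@[simp] lemma pathLen_append (X Y : List Step) :
    pathLen (X ++ Y) = pathLen X + pathLen Y := by simp [pathLen]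

section wtsec
variable {R : Type*} [CommRing R] (a b : ℕ → R)
@[simp] lemma pathWt_nil : pathWt a b [] = 1 := rfl
@[simp] lemma pathWt_cons (s : Step) (T : List Step) :
    pathWt a b (s :: T) = wt a b s * pathWt a b T := by simp [pathWt]
@[simp] lemma pathWt_append (X Y : List Step) :
    pathWt a b (X ++ Y) = pathWt a b X * pathWt a b Y := by simp [pathWt]
end wtsec

/-- Sum of lengths of steps whose ending height (starting from `c`) is `≤ r`. -/
def cntLe (r : ℤ) : ℤ → List Step → ℕ
  | _, [] => 0
  | c, s :: T => (if c + dh s ≤ r then len s else 0) + cntLe r (c + dh s) T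

@[simp] lemma cntLe_nil (r c : ℤ) : cntLe r c [] = 0 := rfl
@[simp] lemma cntLe_cons (r c : ℤ) (s : Step) (T : List Step) :
    cntLe r c (s :: T) = (if c + dh s ≤ r then len s else 0) + cntLe r (c + dh s) T := rfl

lemma cntLe_append (r c : ℤ) (X Y : List Step) :
    cntLe r c (X ++ Y) = cntLe r c X + cntLe r (c + sumdh X) Y := by
  induction X generalizing c with
  | nil => simp
  | cons s T ih =>
    simp only [List.cons_append, cntLe_cons, sumdh_cons]
    rw [ih (c + dh s), show c + dh s + sumdh T = c + (dh s + sumdh T) by ring, add_assoc]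

lemma cntLe_shift (r c d : ℤ) (L : List Step) :
    cntLe (r + d) (c + d) L = cntLe r c L := by
  induction L generalizing c with
  | nil => simp
  | cons s T ih =>
    simp only [cntLe_cons]
    have hiff : (c + d + dh s ≤ r + d) ↔ (c + dh s ≤ r) := by omega
    rw [if_congr hiff rfl rfl, show c + d + dh s = (c + dh s) + d by ring, ih]

lemma cntLe_mono {r r' : ℤ} (h : r ≤ r') (c : ℤ) (L : List Step) :
    cntLe r c L ≤ cntLe r' c L := by
  induction L generalizing c with
  | nil => simp
  | cons s T ih =>
    simp only [cntLe_cons]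
    have := ih (c + dh s)
    have : (if c + dh s ≤ r then len s else 0) ≤ (if c + dh s ≤ r' then len s else 0) := by
      split_ifs <;> omega
    omega

lemma cntLe_le_pathLen (r c : ℤ) (L : List Step) : cntLe r c L ≤ pathLen L := by
  induction L generalizing c with
  | nil => simp
  | cons s T ih =>
    simp only [cntLe_cons, pathLen_cons]
    have := ih (c + dh s)
    split_ifs <;> omega

lemma cntLe_getLast {r r' c : ℤ} (D : List Step) (hD : D ≠ [])
    (h1 : c + sumdh D ≤ r) (h2 : ¬ (c + sumdh D ≤ r')) (hr : r' ≤ r) :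
    cntLe r' c D + len (D.getLast hD) ≤ cntLe r c D := by
  induction D generalizing c with
  | nil => simp at hD
  | cons s T ih =>
    cases T with
    | nil =>
      simp only [sumdh_cons, sumdh_nil, add_zero] at h1 h2
      simp [List.getLast, cntLe_cons, if_pos h1, if_neg h2]
    | cons t T' =>
      have hne : (t :: T') ≠ [] := by simp
      have key := ih (c := c + dh s) hne (by simpa [add_assoc] using h1)
        (by simpa [add_assoc] using h2)
      have hlast : (s :: t :: T').getLast (by simp) = (t :: T').getLast hne := by
        simp [List.getLast]
      rw [hlast, cntLe_cons r' c s (t :: T'), cntLe_cons r c s (t :: T')]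
      have hif : (if c + dh s ≤ r' then len s else 0) ≤ (if c + dh s ≤ r then len s else 0) := by
        split_ifs <;> omega
      omega

end CFaux

namespace CFaux

lemma scanl_head_tail (c : ℤ) (l : List ℤ) :
    List.scanl (· + ·) c l = c :: (List.scanl (· + ·) c l).tail := by
  cases l <;> simp [List.scanl]

lemma npLen_aux (c : ℤ) (L : List Step) :
    ((((L.zip (((L.map dh).scanl (· + ·) c)).tail)).filter
      (fun p => decide (p.2 ≤ 0))).map (fun p => len p.1)).sum = cntLe 0 c L := by
  induction L generalizing c with
  | nil => simp
  | cons s T ih =>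
    rw [show (s :: T).map dh = dh s :: T.map dh from rfl, List.scanl_cons, List.tail_cons]
    rw [scanl_head_tail (c + dh s) (T.map dh)]
    rw [show (s :: T).zip ((c + dh s) :: ((T.map dh).scanl (· + ·) (c + dh s)).tail)
        = (s, c + dh s) :: T.zip (((T.map dh).scanl (· + ·) (c + dh s)).tail) from rfl]
    rw [List.filter_cons]
    simp only [cntLe_cons]
    by_cases h : c + dh s ≤ 0
    · simp [h, ih]
    · simp [h, ih]

lemma npLen_eq (L : List Step) : npLen L = cntLe 0 0 L := npLen_aux 0 L

lemma mem_scanl_iff (c x : ℤ) (L : List Step) :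
    x ∈ (L.map dh).scanl (· + ·) c ↔ ∃ t, t ≤ L.length ∧ x = c + sumdh (L.take t) := by
  induction L generalizing c with
  | nil =>
    simp only [List.map_nil, List.scanl_nil, List.mem_singleton]
    constructor
    · rintro rfl; exact ⟨0, by simp⟩
    · rintro ⟨t, ht, rfl⟩; simp [List.take_nil]
  | cons s T ih =>
    rw [show (s :: T).map dh = dh s :: T.map dh from rfl, List.scanl_cons, List.mem_cons]
    rw [ih (c + dh s)]
    constructor
    · rintro (rfl | ⟨t, ht, rfl⟩)
      · exact ⟨0, by simp⟩
      · exact ⟨t + 1, by simpa using ht, by simp [add_assoc]⟩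
    · rintro ⟨t, ht, rfl⟩
      cases t with
      | zero => left; simp
      | succ t' => right; exact ⟨t', by simpa using ht, by simp [add_assoc]⟩

lemma nonneg_iff (L : List Step) :
    Nonneg L ↔ sumdh L = 0 ∧ ∀ t, t ≤ L.length → 0 ≤ sumdh (L.take t) := by
  unfold Nonneg
  constructor
  · rintro ⟨h1, h2⟩
    refine ⟨h1, fun t ht => ?_⟩
    have := h2 (0 + sumdh (L.take t)) ((mem_scanl_iff 0 _ L).2 ⟨t, ht, rfl⟩)
    simpa using this
  · rintro ⟨h1, h2⟩
    refine ⟨h1, fun x hx => ?_⟩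
    obtain ⟨t, ht, rfl⟩ := (mem_scanl_iff 0 x L).1 hx
    simpa using h2 t ht

end CFaux
namespace CFaux

/-- rank of the pointed rotation of `W` with step `i` last and mark `j`. -/
def mu (W : List Step) (i j : ℕ) : ℕ := cntLe 0 0 (W.drop (i+1) ++ W.take (i+1)) + j

lemma rot_formula (W X Y : List Step) (hW : W = X ++ Y) (hsum : sumdh W = 1) :
    cntLe 0 0 (Y ++ X) = cntLe (sumdh X) (sumdh X) Y + cntLe (sumdh X - 1) 0 X := by
  have hY : sumdh Y = 1 - sumdh X := by
    subst hW; rw [sumdh_append] at hsum; omega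
  rw [cntLe_append, zero_add, hY]
  have e1 : cntLe 0 0 Y = cntLe (sumdh X) (sumdh X) Y := by
    have := cntLe_shift 0 0 (sumdh X) Y
    simpa using this.symm
  have e2 : cntLe 0 (1 - sumdh X) X = cntLe (sumdh X - 1) 0 X := by
    have := cntLe_shift (sumdh X - 1) 0 (1 - sumdh X) X
    rw [show sumdh X - 1 + (1 - sumdh X) = 0 by ring, zero_add] at this
    exact this
  rw [e1, e2]

lemma cntLe_concat {r r' c : ℤ} (D₀ : List Step) (s : Step)
    (h1 : c + sumdh D₀ + dh s ≤ r) (h2 : ¬ (c + sumdh D₀ + dh s ≤ r')) (hr : r' ≤ r) :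
    cntLe r' c (D₀ ++ [s]) + len s ≤ cntLe r c (D₀ ++ [s]) := by
  rw [cntLe_append, cntLe_append]
  have e : ∀ rr : ℤ, cntLe rr (c + sumdh D₀) [s]
      = if c + sumdh D₀ + dh s ≤ rr then len s else 0 := by
    intro rr; simp [cntLe]
  rw [e r, e r', if_pos h1, if_neg h2]
  have := cntLe_mono hr c D₀
  omega

lemma take_succ_getD (W : List Step) (i : ℕ) (h : i < W.length) :
    W.take (i+1) = W.take i ++ [W.getD i Step.up] := by
  rw [List.getD_eq_getElem W Step.up h]
  exact (List.take_concat_get' W i h).symm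

lemma mu_expand (W : List Step) (hsum : sumdh W = 1) (i j : ℕ) :
    mu W i j = cntLe (sumdh (W.take (i+1))) (sumdh (W.take (i+1))) (W.drop (i+1))
      + (cntLe (sumdh (W.take (i+1)) - 1) 0 (W.take (i+1)) + j) := by
  rw [mu, rot_formula W _ _ (List.take_append_drop (i+1) W).symm hsum, add_assoc]

lemma mu_lt (W : List Step) (hsum : sumdh W = 1) {i j i' j' : ℕ}
    (hii' : i < i') (hi' : i' < W.length)
    (hj : j < len (W.getD i Step.up)) (hj' : j' < len (W.getD i' Step.up)) :
    mu W i j ≠ mu W i' j' := by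
  have hi : i < W.length := lt_trans hii' hi'
  have E1 := mu_expand W hsum i j
  have E2 := mu_expand W hsum i' j'
  obtain ⟨si, hsi⟩ : ∃ s, W.getD i Step.up = s := ⟨_, rfl⟩
  obtain ⟨si', hsi'⟩ : ∃ s, W.getD i' Step.up = s := ⟨_, rfl⟩
  rw [hsi] at hj; rw [hsi'] at hj'
  have hlen_take' : (W.take (i'+1)).length = i'+1 := by
    rw [List.length_take]; omega
  have fXD : W.take (i'+1) = W.take (i+1) ++ (W.take (i'+1)).drop (i+1) := by
    have h1 : W.take (i+1) = (W.take (i'+1)).take (i+1) := by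
      rw [List.take_take, min_eq_left (by omega)]
    rw [h1, List.take_append_drop]
  have fY : W.drop (i+1) = (W.take (i'+1)).drop (i+1) ++ W.drop (i'+1) := by
    conv_lhs => rw [← List.take_append_drop (i'+1) W]
    rw [List.drop_append, hlen_take',
      show i + 1 - (i'+1) = 0 from by omega, List.drop_zero]
  have hXc : W.take (i+1) = W.take i ++ [si] := by
    rw [← hsi]; exact take_succ_getD W i hi
  have hDc : (W.take (i'+1)).drop (i+1) = (W.take i').drop (i+1) ++ [si'] := by
    rw [← hsi', take_succ_getD W i' hi', List.drop_append,
      show (W.take i').length = i' from by rw [List.length_take]; omega,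
      show i + 1 - i' = 0 from by omega, List.drop_zero]
  -- make everything opaque
  obtain ⟨h, hh⟩ : ∃ x, sumdh (W.take (i+1)) = x := ⟨_, rfl⟩
  obtain ⟨h', hh'⟩ : ∃ x, sumdh (W.take (i'+1)) = x := ⟨_, rfl⟩
  rw [hh] at E1; rw [hh'] at E2
  obtain ⟨X, hgX⟩ : ∃ x, W.take (i+1) = x := ⟨_, rfl⟩
  rw [hgX] at E1 fXD hXc hh
  obtain ⟨XD, hgXD⟩ : ∃ x, W.take (i'+1) = x := ⟨_, rfl⟩
  rw [hgXD] at E2 fXD fY hDc hh'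
  obtain ⟨D, hgD⟩ : ∃ x, XD.drop (i+1) = x := ⟨_, rfl⟩
  rw [hgD] at fXD fY hDc
  obtain ⟨Y, hgY⟩ : ∃ x, W.drop (i+1) = x := ⟨_, rfl⟩
  rw [hgY] at E1 fY
  obtain ⟨Y', hgY'⟩ : ∃ x, W.drop (i'+1) = x := ⟨_, rfl⟩
  rw [hgY'] at E2 fY
  obtain ⟨X₀, hgX₀⟩ : ∃ x, W.take i = x := ⟨_, rfl⟩
  rw [hgX₀] at hXc
  obtain ⟨D₀, hgD₀⟩ : ∃ x, (W.take i').drop (i+1) = x := ⟨_, rfl⟩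
  rw [hgD₀] at hDc
  -- numeric relations
  have hsum2 : h + sumdh D = h' := by
    rw [← hh, ← hh', fXD, sumdh_append]
  have hrelD : sumdh D = sumdh D₀ + dh si' := by
    rw [hDc, sumdh_append]; simp
  have hrelX : sumdh X₀ + dh si = h := by
    rw [← hh, hXc, sumdh_append]; simp
  rw [fY, cntLe_append, hsum2] at E1
  rw [fXD, cntLe_append, zero_add, hh] at E2
  rcases le_or_gt h' h with hcase | hcase
  · -- mu W i' j' < mu W i j
    have k1 : cntLe (h'-1) h D + len si' ≤ cntLe h h D := by
      rw [hDc]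
      exact cntLe_concat _ _ (by omega) (by omega) (by omega)
    have k2 : cntLe h' h' Y' ≤ cntLe h h' Y' := cntLe_mono hcase h' Y'
    have k3 : cntLe (h'-1) 0 X ≤ cntLe (h-1) 0 X := cntLe_mono (by omega) 0 X
    omega
  · -- mu W i j < mu W i' j'
    have k1 : cntLe (h-1) 0 X + len si ≤ cntLe (h'-1) 0 X := by
      rw [hXc]
      exact cntLe_concat _ _ (by omega) (by omega) (by omega)
    have k2 : cntLe h h D ≤ cntLe (h'-1) h D := cntLe_mono (by omega) h D
    have k3 : cntLe h h' Y' ≤ cntLe h' h' Y' := cntLe_mono (by omega) h' Y'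
    omega

lemma mu_inj (W : List Step) (hsum : sumdh W = 1) {i j i' j' : ℕ}
    (hi : i < W.length) (hi' : i' < W.length)
    (hj : j < len (W.getD i Step.up)) (hj' : j' < len (W.getD i' Step.up))
    (heq : mu W i j = mu W i' j') : i = i' ∧ j = j' := by
  rcases lt_trichotomy i i' with hlt | heqi | hgt
  · exact absurd heq (mu_lt W hsum hlt hi' hj hj')
  · subst heqi
    refine ⟨rfl, ?_⟩
    unfold mu at heq
    omega
  · exact absurd heq.symm (mu_lt W hsum hgt hi hj' hj)

lemma mu_le (W : List Step) (hsum : sumdh W = 1) {i j : ℕ}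
    (hi : i < W.length) (hj : j < len (W.getD i Step.up)) :
    mu W i j + 1 ≤ pathLen W := by
  have E1 := mu_expand W hsum i j
  obtain ⟨si, hsi⟩ : ∃ s, W.getD i Step.up = s := ⟨_, rfl⟩
  rw [hsi] at hj
  have hXc : W.take (i+1) = W.take i ++ [si] := by
    rw [← hsi]; exact take_succ_getD W i hi
  have hWlen : pathLen (W.take (i+1)) + pathLen (W.drop (i+1)) = pathLen W := by
    rw [← pathLen_append, List.take_append_drop]
  obtain ⟨h, hh⟩ : ∃ x, sumdh (W.take (i+1)) = x := ⟨_, rfl⟩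
  rw [hh] at E1
  obtain ⟨X, hgX⟩ : ∃ x, W.take (i+1) = x := ⟨_, rfl⟩
  rw [hgX] at E1 hXc hh hWlen
  obtain ⟨Y, hgY⟩ : ∃ x, W.drop (i+1) = x := ⟨_, rfl⟩
  rw [hgY] at E1 hWlen
  obtain ⟨X₀, hgX₀⟩ : ∃ x, W.take i = x := ⟨_, rfl⟩
  rw [hgX₀] at hXc
  have hrelX : sumdh X₀ + dh si = h := by
    rw [← hh, hXc, sumdh_append]; simp
  have b1 : cntLe h h Y ≤ pathLen Y := cntLe_le_pathLen _ _ _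
  have b2 : cntLe (h-1) 0 X + len si ≤ pathLen X := by
    rw [hXc, cntLe_append, pathLen_append]
    have e : cntLe (h-1) (0 + sumdh X₀) [si]
        = if 0 + sumdh X₀ + dh si ≤ h - 1 then len si else 0 := by
      simp [cntLe]
    rw [e, if_neg (by omega)]
    have := cntLe_le_pathLen (h-1) 0 X₀
    simp only [pathLen_cons, pathLen_nil]
    omega
  omega

lemma pathLen_eq_sum (W : List Step) :
    pathLen W = ∑ i ∈ Finset.range W.length, len (W.getD i Step.up) := by
  induction W with
  | nil => simp
  | cons s T ih =>
    rw [pathLen_cons, List.length_cons, Finset.sum_range_succ', ih]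
    simp only [List.getD_cons_succ, List.getD_cons_zero]
    omega

lemma mu_surj (W : List Step) (hsum : sumdh W = 1) (m : ℕ) (hm : m < pathLen W) :
    ∃ i j, i < W.length ∧ j < len (W.getD i Step.up) ∧ mu W i j = m := by
  classical
  set C : Finset (ℕ × ℕ) := (Finset.range W.length).biUnion
    (fun i => ({i} : Finset ℕ) ×ˢ Finset.range (len (W.getD i Step.up))) with hC
  have memC : ∀ p : ℕ × ℕ, p ∈ C ↔ p.1 < W.length ∧ p.2 < len (W.getD p.1 Step.up) := by
    intro p
    simp only [hC, Finset.mem_biUnion, Finset.mem_range, Finset.mem_product,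
      Finset.mem_singleton]
    constructor
    · rintro ⟨i, hi, hp1, hp2⟩; subst hp1; exact ⟨hi, hp2⟩
    · rintro ⟨h1, h2⟩; exact ⟨p.1, h1, rfl, h2⟩
  have cardC : C.card = pathLen W := by
    rw [hC, Finset.card_biUnion]
    · rw [pathLen_eq_sum]
      congr 1
      ext i
      rw [Finset.card_product, Finset.card_singleton, Finset.card_range, one_mul]
    · intro x hx y hy hxy
      rw [Function.onFun, Finset.disjoint_left]
      rintro p hp hp'
      simp only [Finset.mem_product, Finset.mem_singleton] at hp hp'
      exact hxy (hp.1.symm.trans hp'.1)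
  have hinj : Set.InjOn (fun p : ℕ × ℕ => mu W p.1 p.2) C := by
    intro p hp q hq hpq
    rw [Finset.mem_coe, memC] at hp hq
    simp only at hpq
    have := mu_inj W hsum hp.1 hq.1 hp.2 hq.2 hpq
    exact Prod.ext this.1 this.2
  have hsub : C.image (fun p : ℕ × ℕ => mu W p.1 p.2) ⊆ Finset.range (pathLen W) := by
    intro x hx
    rw [Finset.mem_image] at hx
    obtain ⟨p, hp, rfl⟩ := hx
    rw [memC] at hp
    rw [Finset.mem_range]
    have := mu_le W hsum hp.1 hp.2
    show mu W p.1 p.2 < pathLen W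
    omega
  have himg : C.image (fun p : ℕ × ℕ => mu W p.1 p.2) = Finset.range (pathLen W) := by
    apply Finset.eq_of_subset_of_card_le hsub
    rw [Finset.card_image_of_injOn hinj, cardC, Finset.card_range]
  have hmem : m ∈ C.image (fun p : ℕ × ℕ => mu W p.1 p.2) := by
    rw [himg, Finset.mem_range]; exact hm
  rw [Finset.mem_image] at hmem
  obtain ⟨p, hp, hpm⟩ := hmem
  rw [memC] at hp
  exact ⟨p.1, p.2, hp.1, hp.2, hpm⟩

end CFaux
namespace CFaux

/-- `lm c L = (k, v)`: position (in `0..L.length`) of the last minimum of the heights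
`c, c + h₁, c + h₁ + h₂, …` along `L` started at `c`, together with the minimum value. -/
def lm : ℤ → List Step → ℕ × ℤ
  | c, [] => (0, c)
  | c, s :: T =>
    if c < (lm (c + dh s) T).2 then (0, c)
    else ((lm (c + dh s) T).1 + 1, (lm (c + dh s) T).2)

lemma lm_le (c : ℤ) (L : List Step) : (lm c L).1 ≤ L.length := by
  induction L generalizing c with
  | nil => simp [lm]
  | cons s T ih =>
    rw [lm]
    split_ifs
    · simp
    · simpa using Nat.succ_le_succ (ih (c + dh s))

lemma lm_val (c : ℤ) (L : List Step) : (lm c L).2 = c + sumdh (L.take (lm c L).1) := by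
  induction L generalizing c with
  | nil => simp [lm]
  | cons s T ih =>
    rw [lm]
    split_ifs
    · simp
    · simp only
      rw [List.take_succ_cons, sumdh_cons, ih (c + dh s)]
      ring

lemma lm_min (c : ℤ) (L : List Step) :
    ∀ t, t ≤ L.length → (lm c L).2 ≤ c + sumdh (L.take t) := by
  induction L generalizing c with
  | nil =>
    intro t ht
    have ht0 : t = 0 := by simpa using ht
    subst ht0
    simp [lm]
  | cons s T ih =>
    intro t ht
    rw [lm]
    split_ifs with hc
    · simp only
      cases t with
      | zero => simp
      | succ t' =>
        rw [List.take_succ_cons, sumdh_cons, ← add_assoc]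
        have := ih (c + dh s) t' (by simpa using ht)
        omega
    · simp only
      cases t with
      | zero =>
        simpa using hc
      | succ t' =>
        rw [List.take_succ_cons, sumdh_cons, ← add_assoc]
        exact ih (c + dh s) t' (by simpa using ht)

lemma lm_last (c : ℤ) (L : List Step) :
    ∀ t, (lm c L).1 < t → t ≤ L.length → (lm c L).2 < c + sumdh (L.take t) := by
  induction L generalizing c with
  | nil =>
    intro t ht ht'
    simp [lm] at ht
    simp at ht'
    omega
  | cons s T ih =>
    intro t ht ht'
    rw [lm] at ht ⊢
    split_ifs at ht ⊢ with hc
    · simp only at ht ⊢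
      cases t with
      | zero => omega
      | succ t' =>
        rw [List.take_succ_cons, sumdh_cons, ← add_assoc]
        have := lm_min (c + dh s) T t' (by simpa using ht')
        omega
    · simp only at ht ⊢
      cases t with
      | zero => omega
      | succ t' =>
        rw [List.take_succ_cons, sumdh_cons, ← add_assoc]
        exact ih (c + dh s) t' (by omega) (by simpa using ht')

lemma lm_unique (L : List Step) (k : ℕ) (hk : k ≤ L.length)
    (hmin : ∀ t, t ≤ L.length → sumdh (L.take k) ≤ sumdh (L.take t))
    (hlast : ∀ t, k < t → t ≤ L.length → sumdh (L.take k) < sumdh (L.take t)) :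
    (lm 0 L).1 = k := by
  have h1 := lm_le 0 L
  have h2 := lm_val 0 L
  have h3 := lm_min 0 L
  have h4 := lm_last 0 L
  rcases lt_trichotomy (lm 0 L).1 k with h | h | h
  · exfalso
    have a1 := h4 k h hk
    have a2 := hmin (lm 0 L).1 h1
    omega
  · exact h
  · exfalso
    have a1 := hlast (lm 0 L).1 h h1
    have a2 := h3 k hk
    omega

/-- a canonical word: total rise 1, all intermediate heights `≥ 1`. -/
def GoodW (W : List Step) : Prop :=
  sumdh W = 1 ∧ ∀ t, 1 ≤ t → t ≤ W.length → 1 ≤ sumdh (W.take t)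

lemma canonical (L : List Step) (hne : L ≠ []) (hsum : sumdh L = 1) :
    (lm 0 L).1 < L.length ∧ GoodW (L.drop (lm 0 L).1 ++ L.take (lm 0 L).1) := by
  obtain ⟨k, hk⟩ : ∃ x, (lm 0 L).1 = x := ⟨_, rfl⟩
  have hkle : k ≤ L.length := hk ▸ lm_le 0 L
  have hval : (lm 0 L).2 = sumdh (L.take k) := by rw [lm_val, hk, zero_add]
  have hmin : ∀ t, t ≤ L.length → sumdh (L.take k) ≤ sumdh (L.take t) := by
    intro t ht
    have := lm_min 0 L t ht
    omega
  have hlast : ∀ t, k < t → t ≤ L.length → sumdh (L.take k) < sumdh (L.take t) := by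
    intro t ht ht'
    have := lm_last 0 L t (hk ▸ ht) ht'
    omega
  have hv0 : sumdh (L.take k) ≤ 0 := by
    have := hmin 0 (by omega)
    simpa using this
  have hklt : k < L.length := by
    rcases lt_or_eq_of_le hkle with h | h
    · exact h
    · exfalso
      rw [h, List.take_length, hsum] at hv0
      omega
  rw [hk]
  refine ⟨hklt, ?_, ?_⟩
  · rw [sumdh_append]
    have : sumdh (L.take k) + sumdh (L.drop k) = 1 := by
      rw [← sumdh_append, List.take_append_drop, hsum]
    omega
  · intro t h1t htle
    have hlen : (L.drop k).length = L.length - k := by rw [List.length_drop]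
    have hlen2 : (L.drop k ++ L.take k).length = L.length := by
      rw [List.length_append, List.length_drop, List.length_take]
      omega
    rw [hlen2] at htle
    rcases le_or_gt t (L.length - k) with hcase | hcase
    · -- inside the drop part
      have htake : (L.drop k ++ L.take k).take t = (L.drop k).take t := by
        rw [List.take_append, hlen,
          show t - (L.length - k) = 0 from by omega, List.take_zero, List.append_nil]
      rw [htake]
      have hadd : L.take (k + t) = L.take k ++ (L.drop k).take t := List.take_add
      have : sumdh (L.take (k + t)) = sumdh (L.take k) + sumdh ((L.drop k).take t) := by
        rw [hadd, sumdh_append]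
      have hstrict := hlast (k + t) (by omega) (by omega)
      omega
    · -- wraps into the take part
      have htake : (L.drop k ++ L.take k).take t = L.drop k ++ (L.take k).take (t - (L.length - k)) := by
        rw [List.take_append, hlen,
          List.take_of_length_le (by rw [hlen]; omega)]
      have hu : (L.take k).take (t - (L.length - k)) = L.take (t - (L.length - k)) := by
        rw [List.take_take, min_eq_left (by omega)]
      have hdsum : sumdh (L.drop k) = 1 - sumdh (L.take k) := by
        have : sumdh (L.take k) + sumdh (L.drop k) = 1 := by
          rw [← sumdh_append, List.take_append_drop, hsum]
        omega
      rw [htake, sumdh_append, hu, hdsum]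
      have := hmin (t - (L.length - k)) (by omega)
      omega

lemma lm_rot (W X Y : List Step) (hgood : GoodW W) (hW : W = X ++ Y) (hX : X ≠ []) :
    (lm 0 (Y ++ X)).1 = Y.length := by
  obtain ⟨hsum, hpos⟩ := hgood
  have hXlen : 1 ≤ X.length := by
    cases X with
    | nil => simp at hX
    | cons a T => simp
  have hsumY : sumdh Y = 1 - sumdh X := by
    rw [hW, sumdh_append] at hsum; omega
  have hWlen : W.length = X.length + Y.length := by rw [hW, List.length_append]
  apply lm_unique
  · rw [List.length_append]; omega
  · -- minimality
    intro t ht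
    rw [List.length_append] at ht
    have htY : (Y ++ X).take Y.length = Y := by
      rw [List.take_append, List.take_of_length_le (le_refl _),
        Nat.sub_self, List.take_zero, List.append_nil]
    rw [htY]
    rcases le_or_gt t Y.length with hcase | hcase
    · -- in Y
      have htake : (Y ++ X).take t = Y.take t := by
        rw [List.take_append,
          show t - Y.length = 0 from by omega, List.take_zero, List.append_nil]
      rw [htake]
      -- sumdh (Y.take t)  =  sumdh (W.take (X.length + t)) - sumdh X
      have hWt : W.take (X.length + t) = X ++ Y.take t := by
        rw [hW, List.take_append,
          List.take_of_length_le (by omega),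
          show X.length + t - X.length = t from by omega]
      have h1 : sumdh (W.take (X.length + t)) = sumdh X + sumdh (Y.take t) := by
        rw [hWt, sumdh_append]
      have h2 := hpos (X.length + t) (by omega) (by omega)
      omega
    · -- in X
      obtain ⟨u, hu⟩ : ∃ u, t = Y.length + u := ⟨t - Y.length, by omega⟩
      have hu1 : 1 ≤ u := by omega
      have huX : u ≤ X.length := by omega
      have htake : (Y ++ X).take t = Y ++ X.take u := by
        rw [List.take_append,
          List.take_of_length_le (by omega), hu,
          show Y.length + u - Y.length = u from by omega]
      rw [htake, sumdh_append]
      have hXu : W.take u = X.take u := by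
        rw [hW, List.take_append,
          show u - X.length = 0 from by omega, List.take_zero, List.append_nil]
      have h2 := hpos u hu1 (by omega)
      rw [hXu] at h2
      omega
  · -- strictly last
    intro t ht htle
    rw [List.length_append] at htle
    have htY : (Y ++ X).take Y.length = Y := by
      rw [List.take_append, List.take_of_length_le (le_refl _),
        Nat.sub_self, List.take_zero, List.append_nil]
    rw [htY]
    obtain ⟨u, hu⟩ : ∃ u, t = Y.length + u := ⟨t - Y.length, by omega⟩
    have hu1 : 1 ≤ u := by omega
    have huX : u ≤ X.length := by omega
    have htake : (Y ++ X).take t = Y ++ X.take u := by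
      rw [List.take_append,
        List.take_of_length_le (by omega), hu,
        show Y.length + u - Y.length = u from by omega]
    rw [htake, sumdh_append]
    have hXu : W.take u = X.take u := by
      rw [hW, List.take_append,
        show u - X.length = 0 from by omega, List.take_zero, List.append_nil]
    have h2 := hpos u hu1 (by omega)
    rw [hXu] at h2
    omega

lemma goodW_head (W : List Step) (hgood : GoodW W) (hne : W ≠ []) :
    ∃ P, W = Step.up :: P := by
  obtain ⟨hsum, hpos⟩ := hgood
  cases W with
  | nil => simp at hne
  | cons s P =>
    have := hpos 1 (le_refl _) (by simp)
    rw [show (1:ℕ) = 0 + 1 from rfl, List.take_succ_cons, List.take_zero,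
      sumdh_cons, sumdh_nil, add_zero] at this
    cases s with
    | up => exact ⟨P, rfl⟩
    | flat i => simp [dh] at this
    | down i => simp [dh] at this

lemma goodW_cons_iff (P : List Step) :
    GoodW (Step.up :: P) ↔ (sumdh P = 0 ∧ ∀ t, t ≤ P.length → 0 ≤ sumdh (P.take t)) := by
  constructor
  · rintro ⟨h1, h2⟩
    rw [sumdh_cons, show dh Step.up = 1 from rfl] at h1
    refine ⟨by omega, fun t ht => ?_⟩
    have := h2 (t + 1) (by omega) (by simpa using ht)
    rw [List.take_succ_cons, sumdh_cons, show dh Step.up = 1 from rfl] at this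
    omega
  · rintro ⟨h1, h2⟩
    constructor
    · rw [sumdh_cons, show dh Step.up = 1 from rfl]; omega
    · intro t h1t htle
      cases t with
      | zero => omega
      | succ t' =>
        rw [List.take_succ_cons, sumdh_cons, show dh Step.up = 1 from rfl]
        have := h2 t' (by simpa using htle)
        omega

end CFaux
namespace CFaux

/-- The canonicalization map: rotate at the last minimum and drop the initial up step. -/
def Fm (p : List Step × ℕ) : List Step :=
  (p.1.drop (lm 0 p.1).1 ++ p.1.take (lm 0 p.1).1).tail

lemma rot_getLast (W : List Step) {i : ℕ} (hi : i < W.length) :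
    (W.drop (i+1) ++ W.take (i+1)).getLast? = some (W.getD i Step.up) := by
  rw [take_succ_getD W i hi, ← List.append_assoc, List.getLast?_concat]

lemma mem_rot (W : List Step) (i : ℕ) (s : Step) :
    s ∈ W.drop (i+1) ++ W.take (i+1) ↔ s ∈ W := by
  rw [List.mem_append, Or.comm, ← List.mem_append, List.take_append_drop]

lemma len_pos_of_valid {A B : Finset ℕ} (hA : ∀ i ∈ A, 0 < i) (hB : ∀ i ∈ B, 0 < i)
    {s : Step} (hs : Valid A B s) : 0 < len s := by
  cases s with
  | up => exact Nat.one_pos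
  | flat i => exact hB i hs
  | down i => exact hA i hs

lemma decomp (L : List Step) (hne : L ≠ []) (hsum : sumdh L = 1) :
    ∃ (P : List Step) (i : ℕ),
      i < (Step.up :: P).length ∧
      GoodW (Step.up :: P) ∧
      L = (Step.up :: P).drop (i+1) ++ (Step.up :: P).take (i+1) ∧
      (∀ j, Fm (L, j) = P) := by
  obtain ⟨hklt, hgood⟩ := canonical L hne hsum
  obtain ⟨k, hk⟩ : ∃ x, (lm 0 L).1 = x := ⟨_, rfl⟩
  rw [hk] at hklt hgood
  have hlen_drop : (L.drop k).length = L.length - k := List.length_drop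
  have hWne : L.drop k ++ L.take k ≠ [] := by
    apply List.ne_nil_of_length_pos
    rw [List.length_append, List.length_drop]
    omega
  obtain ⟨P, hP⟩ := goodW_head _ hgood hWne
  refine ⟨P, L.length - k - 1, ?_, ?_, ?_, ?_⟩
  · rw [← hP, List.length_append, List.length_drop, List.length_take]
    omega
  · rw [← hP]; exact hgood
  · rw [← hP, show L.length - k - 1 + 1 = L.length - k from by omega]
    rw [List.drop_left' hlen_drop, List.take_left' hlen_drop, List.take_append_drop]
  · intro j
    rw [Fm]
    simp only [hk]
    rw [hP, List.tail_cons]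

lemma rot_Fm (P : List Step) (hgood : GoodW (Step.up :: P)) {i : ℕ}
    (hi : i < (Step.up :: P).length) (j : ℕ) :
    Fm ((Step.up :: P).drop (i+1) ++ (Step.up :: P).take (i+1), j) = P := by
  have htk_ne : (Step.up :: P).take (i+1) ≠ [] := by
    apply List.ne_nil_of_length_pos
    rw [List.length_take]
    omega
  have hkrot := lm_rot (Step.up :: P) ((Step.up :: P).take (i+1))
    ((Step.up :: P).drop (i+1)) hgood (List.take_append_drop (i+1) _).symm htk_ne
  rw [Fm]
  simp only [hkrot]
  rw [List.drop_left, List.take_left, List.take_append_drop, List.tail_cons]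

theorem main {R : Type*} [CommRing R] (A B : Finset ℕ)
    (hA : ∀ i ∈ A, 0 < i) (hB : ∀ i ∈ B, 0 < i) (a b : ℕ → R)
    (n m : ℕ) (hm : m ≤ n) :
    (∑ᶠ p ∈ {p : List Step × ℕ | (∀ s ∈ p.1, Valid A B s) ∧ (p.1.map dh).sum = 1 ∧
        pathLen p.1 = n + 1 ∧
        (∃ s, p.1.getLast? = some s ∧ 1 ≤ len s ∧ p.2 < len s) ∧
        npLen p.1 + p.2 = m},
      pathWt a b p.1) =
    ∑ᶠ L ∈ {L : List Step | (∀ s ∈ L, Valid A B s) ∧ Nonneg L ∧ pathLen L = n},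
      pathWt a b L := by
  classical
  refine finsum_mem_eq_of_bijOn Fm ⟨?_, ?_, ?_⟩ ?_
  · -- MapsTo
    rintro ⟨L, j⟩ hp
    obtain ⟨hval, hsum, hplen, -, -⟩ := hp
    have hsum' : sumdh L = 1 := hsum
    have hne : L ≠ [] := by
      intro h
      rw [h] at hplen
      simp at hplen
    obtain ⟨P, i, hi, hgood, hLrot, hFm⟩ := decomp L hne hsum'
    have hplen2 : pathLen L = n + 1 := hplen
    rw [show Fm (L, j) = P from hFm j]
    refine ⟨?_, ?_, ?_⟩
    · intro s hs
      apply hval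
      rw [hLrot, mem_rot]
      exact List.mem_cons_of_mem _ hs
    · rw [nonneg_iff]
      exact (goodW_cons_iff P).1 hgood
    · have e1 : pathLen ((Step.up :: P).take (i+1)) + pathLen ((Step.up :: P).drop (i+1))
          = pathLen (Step.up :: P) := by
        rw [← pathLen_append, List.take_append_drop]
      have e2 : pathLen L = pathLen ((Step.up :: P).drop (i+1))
          + pathLen ((Step.up :: P).take (i+1)) := by
        rw [hLrot, pathLen_append]
      have e3 : pathLen (Step.up :: P) = 1 + pathLen P := by
        rw [pathLen_cons]
        rfl
      omega
  · -- InjOn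
    rintro ⟨L, j⟩ hp ⟨L', j'⟩ hp' hF
    obtain ⟨hval, hsum, hplen, ⟨s, hs, hs1, hsj⟩, hnp⟩ := hp
    obtain ⟨hval', hsum', hplen', ⟨s', hs', hs1', hsj'⟩, hnp'⟩ := hp'
    have hsumL : sumdh L = 1 := hsum
    have hsumL' : sumdh L' = 1 := hsum'
    have hne : L ≠ [] := by
      intro h; rw [h] at hplen; simp at hplen
    have hne' : L' ≠ [] := by
      intro h; rw [h] at hplen'; simp at hplen'
    obtain ⟨P, i, hi, hgood, hLrot, hFm⟩ := decomp L hne hsumL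
    obtain ⟨P', i', hi', hgood', hLrot', hFm'⟩ := decomp L' hne' hsumL'
    have hPP : P = P' := by
      rw [← hFm j, ← hFm' j']
      exact hF
    subst hPP
    have hsumW : sumdh (Step.up :: P) = 1 := hgood.1
    have hjlen : j < len ((Step.up :: P).getD i Step.up) := by
      have hgl := rot_getLast (Step.up :: P) hi
      rw [← hLrot, hs] at hgl
      rwa [Option.some.inj hgl] at hsj
    have hjlen' : j' < len ((Step.up :: P).getD i' Step.up) := by
      have hgl := rot_getLast (Step.up :: P) hi'
      rw [← hLrot', hs'] at hgl
      rwa [Option.some.inj hgl] at hsj'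
    have hmuL : mu (Step.up :: P) i j = m := by
      rw [mu, ← hLrot, ← npLen_eq]
      exact hnp
    have hmuL' : mu (Step.up :: P) i' j' = m := by
      rw [mu, ← hLrot', ← npLen_eq]
      exact hnp'
    obtain ⟨hii, hjj⟩ := mu_inj (Step.up :: P) hsumW hi hi' hjlen hjlen'
      (hmuL.trans hmuL'.symm)
    subst hii
    have : L = L' := by rw [hLrot, hLrot']
    exact Prod.ext this hjj
  · -- SurjOn
    intro P hP
    obtain ⟨hvalP, hnn, hplenP⟩ := hP
    have hgood : GoodW (Step.up :: P) := (goodW_cons_iff P).2 ((nonneg_iff P).1 hnn)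
    have hsumW : sumdh (Step.up :: P) = 1 := hgood.1
    have hplenW : pathLen (Step.up :: P) = n + 1 := by
      rw [pathLen_cons, hplenP]
      have : len Step.up = 1 := rfl
      omega
    obtain ⟨i, j, hi, hj, hmu⟩ := mu_surj (Step.up :: P) hsumW m (by omega)
    refine ⟨((Step.up :: P).drop (i+1) ++ (Step.up :: P).take (i+1), j),
      ⟨?_, ?_, ?_, ?_, ?_⟩, rot_Fm P hgood hi j⟩
    · intro s hs
      rw [mem_rot] at hs
      rcases List.mem_cons.mp hs with rfl | hsP
      · trivial
      · exact hvalP s hsP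
    · show sumdh _ = 1
      rw [sumdh_append]
      have : sumdh ((Step.up :: P).take (i+1)) + sumdh ((Step.up :: P).drop (i+1))
          = sumdh (Step.up :: P) := by
        rw [← sumdh_append, List.take_append_drop]
      omega
    · show pathLen _ = n + 1
      rw [pathLen_append]
      have : pathLen ((Step.up :: P).take (i+1)) + pathLen ((Step.up :: P).drop (i+1))
          = pathLen (Step.up :: P) := by
        rw [← pathLen_append, List.take_append_drop]
      omega
    · refine ⟨(Step.up :: P).getD i Step.up, rot_getLast _ hi, ?_, hj⟩
      have hmem : (Step.up :: P).getD i Step.up ∈ (Step.up :: P) := by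
        rw [List.getD_eq_getElem _ _ hi]
        exact List.getElem_mem hi
      have hvalid : Valid A B ((Step.up :: P).getD i Step.up) := by
        rcases List.mem_cons.mp hmem with h | h
        · rw [h]; trivial
        · exact hvalP _ h
      exact len_pos_of_valid hA hB hvalid
    · show npLen _ + j = m
      rw [npLen_eq]
      exact hmu
  · -- weights
    rintro ⟨L, j⟩ hp
    obtain ⟨hval, hsum, hplen, -, -⟩ := hp
    have hsum' : sumdh L = 1 := hsum
    have hne : L ≠ [] := by
      intro h; rw [h] at hplen; simp at hplen
    obtain ⟨P, i, hi, hgood, hLrot, hFm⟩ := decomp L hne hsum'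
    rw [show Fm (L, j) = P from hFm j]
    show pathWt a b L = pathWt a b P
    have e2 : pathWt a b ((Step.up :: P).take (i+1)) * pathWt a b ((Step.up :: P).drop (i+1))
        = pathWt a b (Step.up :: P) := by
      rw [← pathWt_append, List.take_append_drop]
    rw [hLrot, pathWt_append, mul_comm, e2, pathWt_cons]
    show (1 : R) * pathWt a b P = pathWt a b P
    rw [one_mul]

end CFaux


/-- Chung-Feller theorem of Dyck type for Class 2 (Theorem 3.4): for `0 ≤ m ≤ n`, the
total weight of pointed paths from `(0,0)` to the line `y = 1` with total length
`n+1`, last step of length `≥ 1`, mark `j` less than the length of the last step, and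
non-positive pointed length `\bar l(L) + j = m`, equals the total weight of
nonnegative paths of length `n`. -/
theorem class2_chung_feller_dyck_type {R : Type*} [CommRing R] (A B : Finset ℕ)
    (hA : ∀ i ∈ A, 0 < i) (hB : ∀ i ∈ B, 0 < i) (a b : ℕ → R)
    (n m : ℕ) (hm : m ≤ n) :
    (∑ᶠ p ∈ {p : List Step × ℕ | (∀ s ∈ p.1, Valid A B s) ∧ (p.1.map dh).sum = 1 ∧
        pathLen p.1 = n + 1 ∧
        (∃ s, p.1.getLast? = some s ∧ 1 ≤ len s ∧ p.2 < len s) ∧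
        npLen p.1 + p.2 = m},
      pathWt a b p.1) =
    ∑ᶠ L ∈ {L : List Step | (∀ s ∈ L, Valid A B s) ∧ Nonneg L ∧ pathLen L = n},
      pathWt a b L :=
  CFaux.main A B hA hB a b n m hm
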